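/- A vector polynomial in [P_n(ℝ³)]³ has zero divergence if and only if it is the curl of a vector polynomial of degree at most n+1. In particular, the space of divergence-free vector polynomials of degree at most k-3 equals curl([P_{k-2}(ℝ³)]³) and also equals curl(x ∧ [P_{k-3}(ℝ³)]³). -/

import Mathlib

open MvPolynomial

noncomputable section

abbrev Poly3 := MvPolynomial (Fin 3) ℝ

/-- `p ∈ P_m(ℝ³)` (total degree at most `m`, with `P_m = {0}` for `m < 0`). -/
def degLE (m : ℤ) (p : Poly3) : Prop := p = 0 ∨ (p.totalDegree : ℤ) ≤ m

/-- Curl of a vector polynomial. -/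
def pcurl (v : Fin 3 → Poly3) : Fin 3 → Poly3 :=
  ![pderiv 1 (v 2) - pderiv 2 (v 1),
    pderiv 2 (v 0) - pderiv 0 (v 2),
    pderiv 0 (v 1) - pderiv 1 (v 0)]

/-- Divergence of a vector polynomial. -/
def pdiv (v : Fin 3 → Poly3) : Poly3 := ∑ i, pderiv i (v i)

/-- Cross product `x ∧ p` of the position vector with a vector polynomial. -/
def xcross (p : Fin 3 → Poly3) : Fin 3 → Poly3 :=
  ![X 1 * p 2 - X 2 * p 1,
    X 2 * p 0 - X 0 * p 2,
    X 0 * p 1 - X 1 * p 0]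

namespace CurlAux

def mdeg (d : Fin 3 →₀ ℕ) : ℕ := d.sum fun _ k => k

lemma mdeg_add (x y : Fin 3 →₀ ℕ) : mdeg (x + y) = mdeg x + mdeg y := by
  simpa [mdeg] using Finsupp.sum_add_index' (h := fun (_ : Fin 3) (k : ℕ) => k)
    (fun _ => rfl) (fun _ _ _ => rfl)

lemma mdeg_single (i : Fin 3) (n : ℕ) : mdeg (Finsupp.single i n) = n := by
  simp [mdeg, Finsupp.sum_single_index]

/-- The operator scaling each monomial of degree `d` by `1/(d+a)`. -/
def Tw (a : ℕ) (p : Poly3) : Poly3 :=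
  ∑ m ∈ p.support, monomial m (coeff m p / (mdeg m + a))

lemma coeff_Tw (a : ℕ) (p : Poly3) (d : Fin 3 →₀ ℕ) :
    coeff d (Tw a p) = coeff d p / (mdeg d + a) := by
  classical
  rw [Tw, coeff_sum]
  simp only [coeff_monomial]
  rw [Finset.sum_ite_eq' p.support d (fun m => coeff m p / (mdeg m + a))]
  by_cases h : d ∈ p.support
  · simp [h]
  · simp [h, notMem_support_iff.mp h]

lemma coeff_pderiv (i : Fin 3) (p : Poly3) (d : Fin 3 →₀ ℕ) :
    coeff d (pderiv i p) = ((d i : ℝ) + 1) * coeff (d + Finsupp.single i 1) p := by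
  classical
  induction p using MvPolynomial.induction_on' with
  | add p q hp hq => simp [hp, hq, mul_add]
  | monomial m c =>
    rw [pderiv_monomial]
    simp only [coeff_monomial]
    by_cases h : m = d + Finsupp.single i 1
    · subst h
      have h1 : d + Finsupp.single i 1 - Finsupp.single i 1 = d := by
        ext j; simp [Finsupp.tsub_apply]
      have h2 : (d + Finsupp.single i 1 : Fin 3 →₀ ℕ) i = d i + 1 := by
        rw [Finsupp.add_apply, Finsupp.single_eq_same]
      simp [h1, h2, mul_comm]
    · rw [if_neg h]
      by_cases h2 : m - Finsupp.single i 1 = d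
      · rw [if_pos h2]
        by_cases h3 : m i = 0
        · simp [h3]
        · exfalso
          apply h
          rw [← h2, tsub_add_cancel_of_le]
          exact Finsupp.single_le_iff.mpr (Nat.one_le_iff_ne_zero.mpr h3)
      · simp [h2]

lemma pderiv_comm (i j : Fin 3) (p : Poly3) :
    pderiv i (pderiv j p) = pderiv j (pderiv i p) := by
  ext d
  simp only [coeff_pderiv]
  rcases eq_or_ne i j with rfl | h
  · rfl
  · rw [show d + Finsupp.single j 1 + Finsupp.single i 1
        = d + Finsupp.single i 1 + Finsupp.single j 1 from add_right_comm d _ _]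
    simp [Finsupp.single_apply, h, h.symm]
    ring


lemma pdiv_pcurl (w : Fin 3 → Poly3) : pdiv (pcurl w) = 0 := by
  simp only [pdiv, pcurl, Fin.sum_univ_three, Matrix.cons_val_zero, Matrix.cons_val_one,
    Matrix.head_cons, Matrix.cons_val_two, Matrix.tail_cons, map_sub]
  rw [pderiv_comm 0 1, pderiv_comm 0 2, pderiv_comm 1 2]
  ring

lemma Tw_sub (a : ℕ) (p q : Poly3) : Tw a (p - q) = Tw a p - Tw a q := by
  ext d; simp [coeff_Tw, sub_div]

lemma Tw_neg (a : ℕ) (p : Poly3) : Tw a (-p) = -Tw a p := by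
  ext d; simp [coeff_Tw, neg_div]

lemma pderiv_Tw (i : Fin 3) (p : Poly3) : pderiv i (Tw 1 p) = Tw 2 (pderiv i p) := by
  ext d
  rw [coeff_pderiv, coeff_Tw, coeff_Tw, coeff_pderiv]
  rw [show mdeg (d + Finsupp.single i 1) = mdeg d + 1 by rw [mdeg_add, mdeg_single]]
  push_cast
  ring

lemma X_mul_Tw (j : Fin 3) (p : Poly3) : X j * Tw 2 p = Tw 1 (X j * p) := by
  classical
  ext d
  rw [coeff_Tw 1 (X j * p) d, coeff_X_mul', coeff_X_mul']
  by_cases h : j ∈ d.support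
  · rw [if_pos h, if_pos h, coeff_Tw]
    have hle : Finsupp.single j 1 ≤ d := by
      rw [Finsupp.single_le_iff]
      exact Nat.one_le_iff_ne_zero.mpr (Finsupp.mem_support_iff.mp h)
    have : mdeg d = mdeg (d - Finsupp.single j 1) + 1 := by
      conv_lhs => rw [← tsub_add_cancel_of_le hle]
      rw [mdeg_add, mdeg_single]
    rw [this]
    push_cast
    ring
  · rw [if_neg h, if_neg h, zero_div]

lemma coeff_X_mul_pderiv (j : Fin 3) (p : Poly3) (d : Fin 3 →₀ ℕ) :
    coeff d (X j * pderiv j p) = (d j : ℝ) * coeff d p := by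
  classical
  rw [coeff_X_mul']
  by_cases h : j ∈ d.support
  · rw [if_pos h, coeff_pderiv]
    have hle : Finsupp.single j 1 ≤ d := by
      rw [Finsupp.single_le_iff]
      exact Nat.one_le_iff_ne_zero.mpr (Finsupp.mem_support_iff.mp h)
    rw [tsub_add_cancel_of_le hle]
    have h1 : (d - Finsupp.single j 1 : Fin 3 →₀ ℕ) j = d j - 1 := by
      rw [Finsupp.tsub_apply, Finsupp.single_eq_same]
    rw [h1]
    have h2 : 1 ≤ d j := Finsupp.single_le_iff.mp hle
    have : ((d j - 1 : ℕ) : ℝ) = (d j : ℝ) - 1 := by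
      push_cast [h2]; ring
    rw [this]; ring
  · rw [if_neg h]
    have : d j = 0 := by
      by_contra hne
      exact h (Finsupp.mem_support_iff.mpr hne)
    rw [this]; simp

lemma mdeg_sum_apply (d : Fin 3 →₀ ℕ) : (∑ j, (d j : ℝ)) = (mdeg d : ℝ) := by
  rw [mdeg, Finsupp.sum_fintype]
  · push_cast; rfl
  · intro _; rfl

lemma Tw_euler (p : Poly3) : Tw 2 ((∑ j, X j * pderiv j p) + 2 * p) = p := by
  ext d
  rw [coeff_Tw, coeff_add, coeff_sum]
  simp only [coeff_X_mul_pderiv]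
  rw [← Finset.sum_mul, mdeg_sum_apply]
  rw [two_mul, coeff_add]
  have hne : (mdeg d : ℝ) + 2 ≠ 0 := by positivity
  field_simp
  ring


lemma degLE_iff {m : ℤ} {p : Poly3} :
    degLE m p ↔ ∀ d ∈ p.support, (mdeg d : ℤ) ≤ m := by
  constructor
  · rintro (rfl | h) d hd
    · simp at hd
    · exact le_trans (Int.ofNat_le.mpr (le_totalDegree hd)) h
  · intro h
    by_cases hp : p = 0
    · exact Or.inl hp
    · right
      obtain ⟨d0, hd0⟩ := Finset.nonempty_iff_ne_empty.mpr
        (fun he => hp (by rwa [← support_eq_empty]))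
      have hm : 0 ≤ m := le_trans (Int.ofNat_nonneg _) (h d0 hd0)
      have : p.totalDegree ≤ m.toNat := by
        apply Finset.sup_le
        intro d hd
        have := h d hd
        simp only [mdeg] at this
        show (d.sum fun _ e => e) ≤ m.toNat
        omega
      omega
  
lemma degLE_zero (m : ℤ) : degLE m 0 := Or.inl rfl

lemma degLE_mono {m m' : ℤ} (h : m ≤ m') {p : Poly3} (hp : degLE m p) : degLE m' p := by
  rcases hp with rfl | hp
  · exact Or.inl rfl
  · exact Or.inr (le_trans hp h)

lemma degLE_neg {m : ℤ} {p : Poly3} (hp : degLE m p) : degLE m (-p) := by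
  rw [degLE_iff] at hp ⊢
  intro d hd
  exact hp d (by simpa using hd)

lemma degLE_sub {m : ℤ} {p q : Poly3} (hp : degLE m p) (hq : degLE m q) :
    degLE m (p - q) := by
  classical
  rw [degLE_iff] at hp hq ⊢
  intro d hd
  have : d ∈ p.support ∪ (-q).support := by
    rw [sub_eq_add_neg] at hd
    exact support_add hd
  rcases Finset.mem_union.mp this with h | h
  · exact hp d h
  · exact hq d (by simpa using h)

lemma degLE_X_mul {m : ℤ} {p : Poly3} (j : Fin 3) (hp : degLE m p) :
    degLE (m + 1) (X j * p) := by
  classical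
  rw [degLE_iff] at hp ⊢
  intro d hd
  rw [mem_support_iff, coeff_X_mul'] at hd
  by_cases h : j ∈ d.support
  · rw [if_pos h] at hd
    have hle : Finsupp.single j 1 ≤ d := by
      rw [Finsupp.single_le_iff]
      exact Nat.one_le_iff_ne_zero.mpr (Finsupp.mem_support_iff.mp h)
    have h1 : mdeg d = mdeg (d - Finsupp.single j 1) + 1 := by
      conv_lhs => rw [← tsub_add_cancel_of_le hle]
      rw [mdeg_add, mdeg_single]
    have := hp _ (mem_support_iff.mpr hd)
    omega
  · rw [if_neg h] at hd
    exact absurd rfl hd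

lemma degLE_pderiv {m : ℤ} {p : Poly3} (i : Fin 3) (hp : degLE m p) :
    degLE (m - 1) (pderiv i p) := by
  rw [degLE_iff] at hp ⊢
  intro d hd
  rw [mem_support_iff, coeff_pderiv] at hd
  have h2 : coeff (d + Finsupp.single i 1) p ≠ 0 := fun h => hd (by rw [h, mul_zero])
  have := hp _ (mem_support_iff.mpr h2)
  rw [mdeg_add, mdeg_single] at this
  omega

lemma degLE_Tw {m : ℤ} (a : ℕ) {p : Poly3} (hp : degLE m p) : degLE m (Tw a p) := by
  rw [degLE_iff] at hp ⊢
  intro d hd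
  rw [mem_support_iff, coeff_Tw] at hd
  have : coeff d p ≠ 0 := fun h => hd (by rw [h, zero_div])
  exact hp d (mem_support_iff.mpr this)


lemma pd01 : pderiv (0:Fin 3) (X 1 : Poly3) = 0 := pderiv_X_of_ne (by decide)
lemma pd02 : pderiv (0:Fin 3) (X 2 : Poly3) = 0 := pderiv_X_of_ne (by decide)
lemma pd10 : pderiv (1:Fin 3) (X 0 : Poly3) = 0 := pderiv_X_of_ne (by decide)
lemma pd12 : pderiv (1:Fin 3) (X 2 : Poly3) = 0 := pderiv_X_of_ne (by decide)
lemma pd20 : pderiv (2:Fin 3) (X 0 : Poly3) = 0 := pderiv_X_of_ne (by decide)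
lemma pd21 : pderiv (2:Fin 3) (X 1 : Poly3) = 0 := pderiv_X_of_ne (by decide)

lemma curl_xcross_eq (v : Fin 3 → Poly3) (i : Fin 3) :
    pcurl (xcross v) i = X i * pdiv v - ((∑ j, X j * pderiv j (v i)) + 2 * v i) := by
  fin_cases i <;>
  · simp [pcurl, xcross, pdiv, Fin.sum_univ_three, map_sub, pderiv_mul,
      pderiv_X_self, pd01, pd02, pd10, pd12, pd20, pd21]
    ring

lemma pcurl_apply_Tw (u : Fin 3 → Poly3) (i : Fin 3) :
    pcurl (fun j => Tw 1 (u j)) i = Tw 2 (pcurl u i) := by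
  fin_cases i <;>
  · simp [pcurl, pderiv_Tw, ← Tw_sub]

lemma pcurl_neg (w : Fin 3 → Poly3) (i : Fin 3) :
    pcurl (fun j => -(w j)) i = -(pcurl w i) := by
  fin_cases i <;>
  · simp [pcurl, map_neg]
    ring

lemma key (v : Fin 3 → Poly3) (hdiv : pdiv v = 0) :
    v = pcurl (fun j => -(Tw 1 (xcross v j))) := by
  funext i
  rw [pcurl_neg (fun j => Tw 1 (xcross v j)) i, pcurl_apply_Tw, curl_xcross_eq, hdiv,
    mul_zero, zero_sub, Tw_neg, Tw_euler, neg_neg]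

lemma xcross_neg_Tw (v : Fin 3 → Poly3) :
    (fun j => -(Tw 1 (xcross v j))) = xcross (fun i => -(Tw 2 (v i))) := by
  funext j
  fin_cases j <;>
  · simp [xcross, Tw_sub, Tw_neg, mul_neg, ← X_mul_Tw]
    ring

lemma degLE_xcross {m : ℤ} {v : Fin 3 → Poly3} (hv : ∀ i, degLE m (v i)) (j : Fin 3) :
    degLE (m + 1) (xcross v j) := by
  fin_cases j <;>
    exact degLE_sub (degLE_X_mul _ (hv _)) (degLE_X_mul _ (hv _))

lemma degLE_pcurl {m : ℤ} {w : Fin 3 → Poly3} (hw : ∀ i, degLE m (w i)) (i : Fin 3) :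
    degLE (m - 1) (pcurl w i) := by
  fin_cases i <;>
    exact degLE_sub (degLE_pderiv _ (hw _)) (degLE_pderiv _ (hw _))

end CurlAux

open CurlAux

/-- A vector polynomial in `[P_n(ℝ³)]³` is divergence-free iff it is the curl of a
vector polynomial of degree at most `n+1`.  In particular, for `k ≥ 2` the space of
divergence-free vector polynomials of degree at most `k-3` equals
`curl([P_{k-2}]³)`, which also equals `curl(x ∧ [P_{k-3}]³)`. -/
theorem pdiv_eq_zero_iff_curl (n k : ℕ) (hk : 2 ≤ k) (v : Fin 3 → Poly3)
    (hv : ∀ i, degLE (n : ℤ) (v i)) :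
    (pdiv v = 0 ↔ ∃ w : Fin 3 → Poly3, (∀ i, degLE ((n : ℤ) + 1) (w i)) ∧ v = pcurl w) ∧
    {u : Fin 3 → Poly3 | (∀ i, degLE ((k : ℤ) - 3) (u i)) ∧ pdiv u = 0}
      = {u : Fin 3 → Poly3 |
          ∃ w : Fin 3 → Poly3, (∀ i, degLE ((k : ℤ) - 2) (w i)) ∧ u = pcurl w} ∧
    {u : Fin 3 → Poly3 | (∀ i, degLE ((k : ℤ) - 3) (u i)) ∧ pdiv u = 0}
      = {u : Fin 3 → Poly3 |
          ∃ r : Fin 3 → Poly3, (∀ i, degLE ((k : ℤ) - 3) (r i)) ∧ u = pcurl (xcross r)} := by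
  refine ⟨⟨fun hdiv => ?_, ?_⟩, ?_, ?_⟩
  · refine ⟨fun j => -(Tw 1 (xcross v j)), fun j => ?_, key v hdiv⟩
    exact degLE_neg (degLE_Tw 1 (degLE_xcross hv j))
  · rintro ⟨w, -, rfl⟩
    exact pdiv_pcurl w
  · ext u
    simp only [Set.mem_setOf_eq]
    constructor
    · rintro ⟨hdeg, hdiv⟩
      refine ⟨fun j => -(Tw 1 (xcross u j)), fun j => ?_, key u hdiv⟩
      have := degLE_neg (degLE_Tw 1 (degLE_xcross hdeg j))
      exact degLE_mono (by omega) this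
    · rintro ⟨w, hw, rfl⟩
      refine ⟨fun i => degLE_mono (by omega) (degLE_pcurl hw i), pdiv_pcurl w⟩
  · ext u
    simp only [Set.mem_setOf_eq]
    constructor
    · rintro ⟨hdeg, hdiv⟩
      refine ⟨fun i => -(Tw 2 (u i)), fun i => degLE_neg (degLE_Tw 2 (hdeg i)), ?_⟩
      rw [← xcross_neg_Tw u]
      exact key u hdiv
    · rintro ⟨r, hr, rfl⟩
      refine ⟨fun i => ?_, pdiv_pcurl _⟩
      have := degLE_pcurl (degLE_xcross hr) i
      exact degLE_mono (by omega) this
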